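/- (Pure dephasing: the guessed state is the exact state.) Suppose H_St = H_S0 and Φ(|e_i⟩⟨e_i|) = |e_i⟩⟨e_i| for every i. Then E(i) = ε_i for all i, Z̃ = Z_S0, and the best possible guessed state equals the exact evolved state: Θ = U (τ_S0 ⊗ τ_B) U†. -/

import Mathlib

open Matrix Kronecker BigOperators Finset

noncomputable section

/-- Partial trace over the bath (second tensor factor). -/
def ptraceB {n m : ℕ} (X : Matrix (Fin n × Fin m) (Fin n × Fin m) ℂ) :
    Matrix (Fin n) (Fin n) ℂ :=
  Matrix.of fun i i' => ∑ j, X (i, j) (i', j)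

/-- Outer product `|v⟩⟨v|`. -/
def outer {k : ℕ} (v : Fin k → ℂ) : Matrix (Fin k) (Fin k) ℂ :=
  Matrix.vecMulVec v (star v)

/-- Partition function `Z = Tr exp (−β H)` (real part of the trace). -/
def Zpart (β : ℝ) {k : ℕ} (H : Matrix (Fin k) (Fin k) ℂ) : ℝ :=
  (NormedSpace.exp ((-β) • H)).trace.re

/-- Gibbs state `exp (−β H) / Z`. -/
def gibbs (β : ℝ) {k : ℕ} (H : Matrix (Fin k) (Fin k) ℂ) : Matrix (Fin k) (Fin k) ℂ :=
  ((Zpart β H : ℂ)⁻¹) • NormedSpace.exp ((-β) • H)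

/-- The channel `Φ(ρ) = Tr_B [U (ρ ⊗ τB) U†]`. -/
def channel {n m : ℕ} (U : Matrix (Fin n × Fin m) (Fin n × Fin m) ℂ)
    (τB : Matrix (Fin m) (Fin m) ℂ) (ρ : Matrix (Fin n) (Fin n) ℂ) :
    Matrix (Fin n) (Fin n) ℂ :=
  ptraceB (U * (ρ ⊗ₖ τB) * Uᴴ)

lemma exp_spectral {n : ℕ} (HS0 : Matrix (Fin n) (Fin n) ℂ)
    (e : Fin n → Fin n → ℂ) (ε : Fin n → ℝ)
    (he : ∀ i i', ∑ x, (starRingEnd ℂ) (e i x) * e i' x = if i = i' then 1 else 0)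
    (heig : ∀ i, HS0 *ᵥ e i = (ε i : ℂ) • e i) (β : ℝ) :
    NormedSpace.exp ((-β) • HS0)
      = ∑ i, (Real.exp (-(β * ε i)) : ℂ) • outer (e i) := by
  classical
  set V : Matrix (Fin n) (Fin n) ℂ := Matrix.of e with hV
  have hVV : V * Vᴴ = 1 := by
    ext i i'
    simp only [Matrix.mul_apply, conjTranspose_apply, of_apply, Matrix.one_apply,
      Matrix.star_apply, hV]
    have h := congrArg (starRingEnd ℂ) (he i i')
    rw [map_sum] at h
    simp only [_root_.map_mul, Complex.conj_conj] at h
    simpa [mul_comm, apply_ite (starRingEnd ℂ), RCLike.star_def] using h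
  have hVV' : Vᴴ * V = 1 := mul_eq_one_comm.mp hVV
  set M : Matrix (Fin n) (Fin n) ℂ := Vᵀ with hM
  have hMM : M * Mᴴ = 1 := by
    have h2 : M * Mᴴ = (Vᴴ * V)ᵀ := by
      rw [Matrix.transpose_mul, hM]
      congr 1
    rw [h2, hVV', Matrix.transpose_one]
  set D : Matrix (Fin n) (Fin n) ℂ := Matrix.diagonal (fun i => ((-(β * ε i) : ℝ) : ℂ)) with hD
  have hdiag : (-β) • HS0 = M * D * M⁻¹ := by
    have hMinv : M⁻¹ = Mᴴ := Matrix.inv_eq_right_inv hMM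
    rw [hMinv]
    have key : ((-β) • HS0) * M = M * D := by
      ext x i
      have h := congrFun (heig i) x
      simp only [Matrix.mulVec, dotProduct, Pi.smul_apply, smul_eq_mul] at h
      simp only [Matrix.mul_apply, Matrix.smul_apply, hM, Matrix.transpose_apply, hV, of_apply,
        hD, Matrix.diagonal_apply, mul_ite, mul_zero, Finset.sum_ite_eq', Finset.mem_univ,
        if_true, smul_eq_mul]
      calc ∑ x1, (-β) • HS0 x x1 * e i x1
            = (-β : ℂ) * ∑ x1, HS0 x x1 * e i x1 := by
              rw [Finset.mul_sum]
              refine Finset.sum_congr rfl fun y _ => ?_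
              push_cast [Complex.real_smul]
              ring
        _ = e i x * ((-(β * ε i) : ℝ) : ℂ) := by rw [h]; push_cast; ring
    calc (-β) • HS0 = ((-β) • HS0) * (M * Mᴴ) := by rw [hMM, Matrix.mul_one]
    _ = (((-β) • HS0) * M) * Mᴴ := by rw [Matrix.mul_assoc]
    _ = M * D * Mᴴ := by rw [key]
  have hMunit : IsUnit M := Matrix.isUnit_iff_isUnit_det M |>.mpr
    (Matrix.isUnit_det_of_right_inverse hMM)
  rw [hdiag, Matrix.exp_conj M D hMunit, hD, Matrix.exp_diagonal]
  have hMinv : M⁻¹ = Mᴴ := Matrix.inv_eq_right_inv hMM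
  rw [hMinv]
  ext x y
  simp only [Matrix.mul_apply, Matrix.diagonal_apply, conjTranspose_apply, hM,
    Matrix.transpose_apply, hV, of_apply, Matrix.sum_apply, Matrix.smul_apply,
    outer, Matrix.vecMulVec_apply, Pi.star_apply, smul_eq_mul, mul_ite, ite_mul,
    mul_zero, zero_mul, Finset.sum_ite_eq, Finset.sum_ite_eq', Finset.mem_univ, if_true,
    Pi.coe_exp]
  refine Finset.sum_congr rfl fun i _ => ?_
  have hexp : NormedSpace.exp ((-(β * ε i) : ℝ) : ℂ) = (Real.exp (-(β * ε i)) : ℂ) := by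
    rw [← Complex.exp_eq_exp_ℂ, ← Complex.ofReal_exp]
  rw [hexp]; ring

lemma sum_smul_kronecker {n m : ℕ} (c : Fin n → ℂ)
    (A : Fin n → Matrix (Fin n) (Fin n) ℂ) (B : Matrix (Fin m) (Fin m) ℂ) :
    (∑ i, c i • A i) ⊗ₖ B = ∑ i, c i • (A i ⊗ₖ B) := by
  ext ⟨x, j⟩ ⟨y, j'⟩
  simp [Matrix.kroneckerMap_apply, Matrix.sum_apply, Finset.sum_mul, mul_assoc]

theorem pure_dephasing_guessed_is_exact
    (n m : ℕ) (hn : 1 ≤ n) (hm : 1 ≤ m)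
    (β : ℝ) (hβ : 0 < β)
    (HS0 HSt : Matrix (Fin n) (Fin n) ℂ)
    (hHS0 : HS0.IsHermitian) (hHSt : HSt.IsHermitian)
    (HB : Matrix (Fin m) (Fin m) ℂ) (hHB : HB.IsHermitian)
    (e : Fin n → Fin n → ℂ) (ε : Fin n → ℝ)
    (he : ∀ i i', ∑ x, (starRingEnd ℂ) (e i x) * e i' x = if i = i' then 1 else 0)
    (heig : ∀ i, HS0 *ᵥ e i = (ε i : ℂ) • e i)
    (U : Matrix (Fin n × Fin m) (Fin n × Fin m) ℂ)
    (hU : U ∈ Matrix.unitaryGroup (Fin n × Fin m) ℂ)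
    (E : Fin n → ℝ)
    (hE : ∀ i, E i = ((HSt * channel U (gibbs β HB) (outer (e i))).trace).re)
    (Zt : ℝ) (hZt : Zt = ∑ i, Real.exp (-(β * E i)))
    (p : Fin n → ℝ) (hp : ∀ i, p i = Real.exp (-(β * E i)) / Zt)
    (Θ : Matrix (Fin n × Fin m) (Fin n × Fin m) ℂ)
    (hΘ : Θ = ∑ i, (p i : ℂ) • (U * (outer (e i) ⊗ₖ gibbs β HB) * Uᴴ))
    (hHt : HSt = HS0)
    (hdeph : ∀ i, channel U (gibbs β HB) (outer (e i)) = outer (e i)) :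
    (∀ i, E i = ε i) ∧ Zt = Zpart β HS0
      ∧ Θ = U * (gibbs β HS0 ⊗ₖ gibbs β HB) * Uᴴ := by
  classical
  have htr : ∀ i, (HS0 * outer (e i)).trace = (ε i : ℂ) := by
    intro i
    have h := fun x => congrFun (heig i) x
    simp only [Matrix.mulVec, dotProduct, Pi.smul_apply, smul_eq_mul] at h
    rw [Matrix.trace]
    simp only [Matrix.diag_apply, Matrix.mul_apply, outer, Matrix.vecMulVec_apply, Pi.star_apply]
    calc ∑ x, ∑ y, HS0 x y * (e i y * star (e i x))
        = ∑ x, (∑ y, HS0 x y * e i y) * star (e i x) := by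
          refine Finset.sum_congr rfl fun x _ => ?_
          rw [Finset.sum_mul]
          exact Finset.sum_congr rfl fun y _ => by ring
      _ = ∑ x, (ε i : ℂ) * ((starRingEnd ℂ) (e i x) * e i x) := by
          refine Finset.sum_congr rfl fun x _ => ?_
          rw [h x, RCLike.star_def]; ring
      _ = (ε i : ℂ) * ∑ x, (starRingEnd ℂ) (e i x) * e i x := by rw [Finset.mul_sum]
      _ = (ε i : ℂ) := by rw [he i i]; simp
  have hEi : ∀ i, E i = ε i := by
    intro i
    rw [hE, hHt, hdeph, htr]
    exact Complex.ofReal_re _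
  have htrout : ∀ i, (outer (e i)).trace = 1 := by
    intro i
    have h := he i i
    rw [if_pos rfl] at h
    rw [Matrix.trace]
    simp only [Matrix.diag_apply, outer, Matrix.vecMulVec_apply, Pi.star_apply]
    calc ∑ x, e i x * star (e i x)
        = ∑ x, (starRingEnd ℂ) (e i x) * e i x :=
          Finset.sum_congr rfl fun x _ => by rw [RCLike.star_def]; ring
      _ = 1 := h
  have hZp : Zpart β HS0 = ∑ i, Real.exp (-(β * ε i)) := by
    rw [Zpart, exp_spectral HS0 e ε he heig β, Matrix.trace_sum]
    simp only [Matrix.trace_smul, htrout, smul_eq_mul, mul_one]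
    rw [Complex.re_sum]
    refine Finset.sum_congr rfl fun i _ => ?_
    exact Complex.ofReal_re _
  have hZteq : Zt = Zpart β HS0 := by
    rw [hZt, hZp]
    exact Finset.sum_congr rfl fun i _ => by rw [hEi i]
  refine ⟨hEi, hZteq, ?_⟩
  have hgibbs : gibbs β HS0 = ∑ i, ((p i : ℝ) : ℂ) • outer (e i) := by
    rw [gibbs, exp_spectral HS0 e ε he heig β, Finset.smul_sum]
    refine Finset.sum_congr rfl fun i _ => ?_
    rw [smul_smul, hp i, hEi i, hZteq]
    push_cast [div_eq_inv_mul]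
    ring_nf
  rw [hΘ, hgibbs, sum_smul_kronecker, Matrix.mul_sum, Matrix.sum_mul]
  refine Finset.sum_congr rfl fun i _ => ?_
  rw [Matrix.mul_smul, Matrix.smul_mul]
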